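/- arXiv:2402.08828 — 3 statements merged into one kernel-verified Lean document; each statement's English description precedes it below -/
import Mathlib

section
/- Under the setting of the value-difference identity, assume additionally the margin bound: there is c > 0 and α ∈ (0,1] such that P(f f* < 0) ≤ c·(E[𝟙{f f* < 0}·|2η - 1|])^α, where 2η - 1 = (r¹ - r⁻¹)/(r¹ + r⁻¹). If r¹ + r⁻¹ ≥ c_r everywhere, then P(f f* < 0) ≤ c·(ΔV(f)/c_r)^α. -/
open MeasureTheory

/-- Under the margin (Tsybakov-type) bound, the misclassification probability
is bounded by `c · (ΔV(f)/c_r)^α`. -/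
theorem misclassification_rate_bound {Ω : Type*} [MeasurableSpace Ω]
    (P : Measure Ω) [IsProbabilityMeasure P]
    (r₁ r₂ : Ω → ℝ) (rbar : ℝ)
    (hr₁ : Measurable r₁) (hr₂ : Measurable r₂)
    (hr₁b : ∀ ω, r₁ ω ∈ Set.Icc 0 rbar) (hr₂b : ∀ ω, r₂ ω ∈ Set.Icc 0 rbar)
    (cr : ℝ) (hcr : 0 < cr) (hsum : ∀ ω, cr ≤ r₁ ω + r₂ ω)
    (f fstar : Ω → ℝ) (hf : Measurable f) (hfs : Measurable fstar)
    (hfv : ∀ ω, f ω = -1 ∨ f ω = 1) (hfsv : ∀ ω, fstar ω = -1 ∨ fstar ω = 1)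
    (hopt : ∀ ω, r₁ ω ≠ r₂ ω → fstar ω = if r₂ ω < r₁ ω then 1 else -1)
    (c α : ℝ) (hc : 0 < c) (hα0 : 0 < α) (hα1 : α ≤ 1)
    (hmargin : (P {ω | f ω * fstar ω < 0}).toReal ≤
      c * (∫ ω, (if f ω * fstar ω < 0 then (1 : ℝ) else 0) *
            |(r₁ ω - r₂ ω) / (r₁ ω + r₂ ω)| ∂P) ^ α) :
    (P {ω | f ω * fstar ω < 0}).toReal ≤
      c * ((∫ ω, (if f ω * fstar ω < 0 then (1 : ℝ) else 0) *
            |r₁ ω - r₂ ω| ∂P) / cr) ^ α := by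
  set g : Ω → ℝ := fun ω => (if f ω * fstar ω < 0 then (1 : ℝ) else 0) *
      |(r₁ ω - r₂ ω) / (r₁ ω + r₂ ω)| with hg
  set h : Ω → ℝ := fun ω => (if f ω * fstar ω < 0 then (1 : ℝ) else 0) *
      |r₁ ω - r₂ ω| with hh
  have hSmeas : MeasurableSet {ω | f ω * fstar ω < 0} :=
    measurableSet_lt (hf.mul hfs) measurable_const
  have hind : Measurable fun ω => (if f ω * fstar ω < 0 then (1 : ℝ) else 0) :=
    Measurable.ite hSmeas measurable_const measurable_const
  have hgmeas : Measurable g := hind.mul (((hr₁.sub hr₂).div (hr₁.add hr₂)).abs)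
  have hhmeas : Measurable h := hind.mul ((hr₁.sub hr₂).abs)
  have habs : ∀ ω, |r₁ ω - r₂ ω| ≤ 2 * rbar := by
    intro ω
    obtain ⟨h1a, h1b⟩ := Set.mem_Icc.mp (hr₁b ω)
    obtain ⟨h2a, h2b⟩ := Set.mem_Icc.mp (hr₂b ω)
    rw [abs_le]; constructor <;> linarith
  have hindle : ∀ ω, (if f ω * fstar ω < 0 then (1 : ℝ) else 0) ∈ Set.Icc (0:ℝ) 1 := by
    intro ω; split <;> simp
  have hgle : ∀ ω, g ω ≤ h ω / cr := by
    intro ω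
    have hpos : 0 < r₁ ω + r₂ ω := lt_of_lt_of_le hcr (hsum ω)
    have key : |(r₁ ω - r₂ ω) / (r₁ ω + r₂ ω)| ≤ |r₁ ω - r₂ ω| / cr := by
      rw [abs_div, abs_of_pos hpos]
      gcongr
      exact hsum ω
    simp only [hg, hh, mul_div_assoc]
    exact mul_le_mul_of_nonneg_left key (hindle ω).1
  have hgnn : ∀ ω, 0 ≤ g ω := by
    intro ω; have := (hindle ω).1; exact mul_nonneg this (abs_nonneg _)
  have hhnn : ∀ ω, 0 ≤ h ω := by
    intro ω; have := (hindle ω).1; exact mul_nonneg this (abs_nonneg _)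
  have hgint : Integrable g P := by
    refine ⟨hgmeas.aestronglyMeasurable, ?_⟩
    apply HasFiniteIntegral.of_bounded (C := 2 * rbar / cr)
    filter_upwards with ω
    rw [Real.norm_eq_abs, abs_of_nonneg (hgnn ω)]
    calc g ω ≤ h ω / cr := hgle ω
      _ ≤ 2 * rbar / cr := by
          gcongr
          calc h ω ≤ 1 * |r₁ ω - r₂ ω| := by
                apply mul_le_mul_of_nonneg_right (hindle ω).2 (abs_nonneg _)
            _ ≤ 2 * rbar := by rw [one_mul]; exact habs ω
  have hhint : Integrable h P := by
    refine ⟨hhmeas.aestronglyMeasurable, ?_⟩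
    apply HasFiniteIntegral.of_bounded (C := 2 * rbar)
    filter_upwards with ω
    rw [Real.norm_eq_abs, abs_of_nonneg (hhnn ω)]
    calc h ω ≤ 1 * |r₁ ω - r₂ ω| := by
          apply mul_le_mul_of_nonneg_right (hindle ω).2 (abs_nonneg _)
      _ ≤ 2 * rbar := by rw [one_mul]; exact habs ω
  have hint_le : ∫ ω, g ω ∂P ≤ (∫ ω, h ω ∂P) / cr := by
    rw [div_eq_mul_inv, ← integral_mul_const]
    exact integral_mono hgint (hhint.mul_const _) fun ω => by
      simpa [div_eq_mul_inv] using hgle ω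
  have hgint_nn : 0 ≤ ∫ ω, g ω ∂P := integral_nonneg hgnn
  calc (P {ω | f ω * fstar ω < 0}).toReal ≤ c * (∫ ω, g ω ∂P) ^ α := hmargin
    _ ≤ c * ((∫ ω, h ω ∂P) / cr) ^ α := by
        apply mul_le_mul_of_nonneg_left _ hc.le
        exact Real.rpow_le_rpow hgint_nn hint_le hα0.le
end

section
/- Change of measure identity: let X be a random variable on (Ω, ℱ, P) with density h on ℝ^d, A ∈ {-1,1} with conditional probability π(a; x) = P(A = a | X = x) > 0, and nonnegative measurable rewards r^{(a)}(x) with g(x) := r^{(1)}(x) + r^{(-1)}(x) and C := ∫ g(x) h(x) dx > 0. Define h'(x) = g(x)h(x)/C and π'(a; x) = r^{(a)}(x)/g(x) when g(x) > 0 (and 1/2 otherwise). Then for any bounded measurable loss φ and measurable f, E[ (r^{(A)}(X)/π(A;X)) φ(A f(X)) ] = C · E'[ φ(A f(X)) ], where E' denotes expectation under density h' for X and conditional law π' for A. -/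
open MeasureTheory

/-- Change of measure identity for outcome-weighted learning: the
propensity-weighted expected loss equals `C` times the expected loss under the
tilted covariate density `h'(x) = g(x)h(x)/C` and the policy
`π'(a;x) = r^{(a)}(x)/g(x)`. -/
theorem change_of_measure_identity (d : ℕ)
    (r₁ rneg h : (Fin d → ℝ) → ℝ) (π : ℝ → (Fin d → ℝ) → ℝ)
    (hr₁ : ∀ x, 0 ≤ r₁ x) (hrneg : ∀ x, 0 ≤ rneg x)
    (hh : ∀ x, 0 ≤ h x)
    (p₀ : ℝ) (hp₀ : 0 < p₀)
    (hπ : ∀ a x, (a = 1 ∨ a = -1) → p₀ < π a x)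
    (hπsum : ∀ x, π 1 x + π (-1) x = 1)
    (hmr₁ : Measurable r₁) (hmrneg : Measurable rneg) (hmh : Measurable h)
    (hmπ : ∀ a, Measurable (π a))
    (C : ℝ) (hC : C = ∫ x, (r₁ x + rneg x) * h x) (hCpos : 0 < C)
    (h' : (Fin d → ℝ) → ℝ) (hh' : ∀ x, h' x = (r₁ x + rneg x) * h x / C)
    (π' : ℝ → (Fin d → ℝ) → ℝ)
    (hπ'1 : ∀ x, π' 1 x = if 0 < r₁ x + rneg x then r₁ x / (r₁ x + rneg x) else 1 / 2)
    (hπ'neg : ∀ x, π' (-1) x =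
      if 0 < r₁ x + rneg x then rneg x / (r₁ x + rneg x) else 1 / 2)
    (φ : ℝ → ℝ) (B : ℝ) (hφb : ∀ t, |φ t| ≤ B) (hmφ : Measurable φ)
    (f : (Fin d → ℝ) → ℝ) (hmf : Measurable f) :
    (∫ x, ((r₁ x / π 1 x) * φ (f x) * π 1 x +
           (rneg x / π (-1) x) * φ (-(f x)) * π (-1) x) * h x) =
      C * ∫ x, (φ (f x) * π' 1 x + φ (-(f x)) * π' (-1) x) * h' x := by
  rw [← MeasureTheory.integral_const_mul]
  apply integral_congr_ae
  filter_upwards with x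
  have h1 : π 1 x ≠ 0 := ne_of_gt (hp₀.trans (hπ 1 x (Or.inl rfl)))
  have h2 : π (-1) x ≠ 0 := ne_of_gt (hp₀.trans (hπ (-1) x (Or.inr rfl)))
  have hCne : C ≠ 0 := ne_of_gt hCpos
  rw [hh' x, hπ'1 x, hπ'neg x]
  by_cases hg : 0 < r₁ x + rneg x
  · have hgne : r₁ x + rneg x ≠ 0 := ne_of_gt hg
    simp only [if_pos hg]
    field_simp
  · have hr1 : r₁ x = 0 := le_antisymm (by linarith [hrneg x]) (hr₁ x)
    have hr2 : rneg x = 0 := le_antisymm (by linarith [hr₁ x]) (hrneg x)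
    simp [hr1, hr2]
end

section
/- For the mollified sign approximation: if |F(x) - s(x)| ≤ 8·exp(-σ² ω(x)²/(2d)) pointwise, where s takes values in {-1,1}, and the distribution of X satisfies E[exp(-t·ω(X)²)] ≤ C·t^{-qd/2} for all t > 0 (geometric noise condition), then E|F(X) - s(X)| ≤ 8C·(2d)^{qd/2}·σ^{-qd}. -/
open MeasureTheory

/-- Under the geometric noise condition, the mollified sign approximation
error satisfies `E|F(X) - s(X)| ≤ 8C (2d)^{qd/2} σ^{-qd}`. -/
theorem mollified_sign_approximation (d : ℕ) (hd : 1 ≤ d)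
    {Ω : Type*} [MeasurableSpace Ω] (μ : Measure Ω) [IsProbabilityMeasure μ]
    (X : Ω → (Fin d → ℝ)) (hX : Measurable X)
    (ω : (Fin d → ℝ) → ℝ) (hω : Measurable ω) (hωnn : ∀ x, 0 ≤ ω x)
    (F s : (Fin d → ℝ) → ℝ) (hF : Measurable F) (hs : Measurable s)
    (hFb : ∀ x, F x ∈ Set.Icc (-1 : ℝ) 1)
    (hsv : ∀ x, s x = -1 ∨ s x = 1)
    (σ : ℝ) (hσ : 0 < σ) (q : ℝ) (hq : 0 < q) (C : ℝ) (hC : 0 < C)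
    (happrox : ∀ x, |F x - s x| ≤ 8 * Real.exp (-σ ^ 2 * ω x ^ 2 / (2 * d)))
    (hnoise : ∀ t : ℝ, 0 < t →
      (∫ ω', Real.exp (-t * ω (X ω') ^ 2) ∂μ) ≤ C * t ^ (-(q * d) / 2)) :
    (∫ ω', |F (X ω') - s (X ω')| ∂μ) ≤
      8 * C * (2 * d : ℝ) ^ (q * d / 2) * σ ^ (-(q * d)) := by
  have hd0 : (0 : ℝ) < 2 * d := by positivity
  set t : ℝ := σ ^ 2 / (2 * d) with ht
  have htpos : 0 < t := by positivity
  -- rewrite the exponent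
  have hexp : ∀ x, -σ ^ 2 * ω x ^ 2 / (2 * d) = -t * ω x ^ 2 := by
    intro x; rw [ht]; ring
  -- integrability
  have hmeas1 : Measurable fun ω' => |F (X ω') - s (X ω')| :=
    ((hF.comp hX).sub (hs.comp hX)).abs
  have hint1 : Integrable (fun ω' => |F (X ω') - s (X ω')|) μ := by
    refine Integrable.mono' (integrable_const (2 : ℝ)) hmeas1.aestronglyMeasurable ?_
    refine Filter.Eventually.of_forall fun ω' => ?_
    have h1 := (hFb (X ω')).1
    have h2 := (hFb (X ω')).2
    rcases hsv (X ω') with h | h <;>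
      simp only [Real.norm_eq_abs, abs_abs, abs_sub_le_iff, h] <;> constructor <;> linarith
  have hmeas2 : Measurable fun ω' => Real.exp (-t * ω (X ω') ^ 2) :=
    (((measurable_const.mul ((hω.comp hX).pow_const 2))).exp)
  have hint2 : Integrable (fun ω' => Real.exp (-t * ω (X ω') ^ 2)) μ := by
    refine Integrable.mono' (integrable_const (1 : ℝ)) hmeas2.aestronglyMeasurable ?_
    refine Filter.Eventually.of_forall fun ω' => ?_
    rw [Real.norm_eq_abs, abs_of_pos (Real.exp_pos _)]
    apply Real.exp_le_one_iff.2
    have := hωnn (X ω')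
    nlinarith [sq_nonneg (ω (X ω')), htpos.le]
  -- step 1 : bound the integral
  have step1 : (∫ ω', |F (X ω') - s (X ω')| ∂μ) ≤
      ∫ ω', 8 * Real.exp (-t * ω (X ω') ^ 2) ∂μ := by
    refine integral_mono hint1 (hint2.const_mul 8) fun ω' => ?_
    have := happrox (X ω')
    rwa [hexp (X ω')] at this
  rw [integral_const_mul] at step1
  have step2 : (∫ ω', Real.exp (-t * ω (X ω') ^ 2) ∂μ) ≤ C * t ^ (-(q * d) / 2) :=
    hnoise t htpos
  have step3 : (∫ ω', |F (X ω') - s (X ω')| ∂μ) ≤ 8 * (C * t ^ (-(q * d) / 2)) := by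
    calc _ ≤ 8 * ∫ ω', Real.exp (-t * ω (X ω') ^ 2) ∂μ := step1
      _ ≤ 8 * (C * t ^ (-(q * d) / 2)) := by nlinarith
  refine step3.trans (le_of_eq ?_)
  have hσ2 : (0 : ℝ) ≤ σ ^ 2 := sq_nonneg σ
  rw [ht, Real.div_rpow hσ2 hd0.le]
  have h1 : (σ ^ 2 : ℝ) ^ (-(q * d) / 2) = σ ^ (-(q * d)) := by
    rw [← Real.rpow_natCast σ 2, ← Real.rpow_mul hσ.le]
    congr 1; ring
  have h2 : ((2 * d : ℝ)) ^ (-(q * d) / 2) = ((2 * d : ℝ) ^ (q * d / 2))⁻¹ := by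
    rw [← Real.rpow_neg hd0.le]
    congr 1; ring
  rw [h1, h2]
  field_simp
end
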